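/- Every tree T on n ≥ 2 vertices and every vertex v of T satisfies μ_T(v) > μ_T, where μ_T is the mean subtree order of T and μ_T(v) is the local mean subtree order at v. -/

import Mathlib

open scoped Classical

/-- The subtrees (nonempty connected induced subgraphs) of a graph, as vertex sets. -/
noncomputable def subtrees {V : Type*} [Fintype V] (G : SimpleGraph V) :
    Finset (Finset V) :=
  Finset.univ.filter (fun s => s.Nonempty ∧ (G.induce (s : Set V)).Connected)

/-- The subtrees of a graph containing a fixed vertex `r`. -/
noncomputable def subtreesThrough {V : Type*} [Fintype V] (G : SimpleGraph V) (r : V) :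
    Finset (Finset V) :=
  Finset.univ.filter (fun s => r ∈ s ∧ (G.induce (s : Set V)).Connected)

namespace Jamison

open SimpleGraph Finset

variable {V : Type*} {G : SimpleGraph V}

/-- `s` induces a nonempty connected subgraph. -/
def Good (G : SimpleGraph V) (s : Finset V) : Prop :=
  s.Nonempty ∧ (G.induce (s : Set V)).Connected

/-- `x` and `y` are joined by a walk whose support lies in `s`. -/
def Reach (G : SimpleGraph V) (s : Finset V) (x y : V) : Prop :=
  ∃ p : G.Walk x y, ∀ z ∈ p.support, z ∈ s

lemma Reach.mem_left {s : Finset V} {x y : V} (h : Reach G s x y) : x ∈ s := by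
  obtain ⟨p, hp⟩ := h; exact hp _ p.start_mem_support

lemma Reach.mem_right {s : Finset V} {x y : V} (h : Reach G s x y) : y ∈ s := by
  obtain ⟨p, hp⟩ := h; exact hp _ p.end_mem_support

lemma Reach.refl {s : Finset V} {x : V} (hx : x ∈ s) : Reach G s x x :=
  ⟨Walk.nil, by simp [hx]⟩

lemma Reach.symm {s : Finset V} {x y : V} (h : Reach G s x y) : Reach G s y x := by
  obtain ⟨p, hp⟩ := h
  exact ⟨p.reverse, by simpa [Walk.support_reverse] using hp⟩

lemma Reach.trans {s : Finset V} {x y z : V} (h : Reach G s x y) (h' : Reach G s y z) :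
    Reach G s x z := by
  obtain ⟨p, hp⟩ := h; obtain ⟨q, hq⟩ := h'
  refine ⟨p.append q, fun u hu => ?_⟩
  rcases (Walk.mem_support_append_iff _ _).1 hu with h | h
  · exact hp _ h
  · exact hq _ h

lemma Reach.mono {s s' : Finset V} {x y : V} (hss : s ⊆ s') (h : Reach G s x y) :
    Reach G s' x y := by
  obtain ⟨p, hp⟩ := h; exact ⟨p, fun z hz => hss (hp z hz)⟩

lemma reach_of_mem_support {s : Finset V} {x y z : V} {p : G.Walk x y}
    (hp : ∀ u ∈ p.support, u ∈ s) (hz : z ∈ p.support) : Reach G s x z :=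
  ⟨p.takeUntil z hz, fun u hu => hp u (Walk.support_takeUntil_subset _ _ hu)⟩

lemma reachable_induce_of_walk {s : Finset V} : ∀ {x y : V} (p : G.Walk x y),
    (∀ z ∈ p.support, z ∈ s) →
    ∀ (hx : x ∈ (s : Set V)) (hy : y ∈ (s : Set V)),
      (G.induce (s : Set V)).Reachable ⟨x, hx⟩ ⟨y, hy⟩ := by
  intro x y p
  induction p with
  | nil => intro _ hx hy; exact Reachable.refl _
  | @cons a b c hab q ih =>
    intro hsup hx hy
    have hb : b ∈ s := hsup b (by simp)
    have h1 : (G.induce (s : Set V)).Adj ⟨a, hx⟩ ⟨b, hb⟩ := hab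
    exact (h1.reachable).trans (ih (fun z hz => hsup z (by simp [hz])) hb hy)

lemma good_of_reach {s : Finset V} (hne : s.Nonempty)
    (h : ∀ x ∈ s, ∀ y ∈ s, Reach G s x y) : Good G s := by
  refine ⟨hne, ?_⟩
  obtain ⟨x0, hx0⟩ := hne
  haveI : Nonempty (s : Set V) := ⟨⟨x0, hx0⟩⟩
  refine ⟨fun a b => ?_⟩
  obtain ⟨xa, hxa⟩ := a
  obtain ⟨xb, hxb⟩ := b
  obtain ⟨p, hp⟩ := h xa hxa xb hxb
  exact reachable_induce_of_walk p (fun z hz => hp z hz) hxa hxb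

lemma good_singleton (x : V) : Good G {x} :=
  good_of_reach ⟨x, mem_singleton_self x⟩ (by
    intro a ha b hb
    rw [mem_singleton] at ha hb
    subst ha; subst hb
    exact Reach.refl (mem_singleton_self _))

lemma Good.exists_path {s : Finset V} (hs : Good G s) {x y : V} (hx : x ∈ s) (hy : y ∈ s) :
    ∃ p : G.Walk x y, p.IsPath ∧ ∀ z ∈ p.support, z ∈ s := by
  obtain ⟨-, hconn⟩ := hs
  obtain ⟨q⟩ := hconn ⟨x, hx⟩ ⟨y, hy⟩
  let p0 : G.Walk x y := q.map (SimpleGraph.Embedding.induce (s : Set V)).toHom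
  have hsup : ∀ z ∈ p0.support, z ∈ s := by
    intro z hz
    rw [show p0.support = _ from Walk.support_map (SimpleGraph.Embedding.induce (s : Set V)).toHom q] at hz
    obtain ⟨⟨z', hz'⟩, _, rfl⟩ := List.mem_map.1 hz
    exact hz'
  exact ⟨p0.toPath, (p0.toPath).2, fun z hz => hsup z (Walk.support_toPath_subset _ hz)⟩

/-- In a tree, any path between two vertices of a good set stays inside the set. -/
lemma path_support_mem (hG : G.IsTree) {s : Finset V} (hs : Good G s) {x y : V}
    (hx : x ∈ s) (hy : y ∈ s) {p : G.Walk x y} (hp : p.IsPath) : ∀ z ∈ p.support, z ∈ s := by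
  obtain ⟨q, hq, hqs⟩ := hs.exists_path hx hy
  have hpq : p = q := congrArg Subtype.val (hG.2.path_unique (⟨p, hp⟩ : G.Path x y) ⟨q, hq⟩)
  intro z hz
  exact hqs z (hpq ▸ hz)

lemma Good.reach {s : Finset V} (hs : Good G s) {x y : V} (hx : x ∈ s) (hy : y ∈ s) :
    Reach G s x y := by
  obtain ⟨p, _, hps⟩ := hs.exists_path hx hy
  exact ⟨p, hps⟩

section Branch

variable (G) in
/-- The branch of `t` at `r` reachable through `w`: vertices of `t.erase r`
connected to `w` within `t.erase r`. -/
noncomputable def Br (t : Finset V) (r w : V) : Finset V :=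
  (t.erase r).filter (fun x => Reach G (t.erase r) w x)

variable (G) in
/-- The neighbours of `r` inside `t`. -/
noncomputable def Wset (t : Finset V) (r : V) : Finset V :=
  (t.erase r).filter (fun w => G.Adj r w)

lemma mem_Br {t : Finset V} {r w x : V} :
    x ∈ Br G t r w ↔ x ∈ t.erase r ∧ Reach G (t.erase r) w x := by
  simp [Br]

lemma Br_subset_erase {t : Finset V} {r w : V} : Br G t r w ⊆ t.erase r :=
  filter_subset _ _

lemma mem_Wset {t : Finset V} {r w : V} :
    w ∈ Wset G t r ↔ w ∈ t.erase r ∧ G.Adj r w := by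
  simp [Wset]

lemma self_mem_Br {t : Finset V} {r w : V} (hw : w ∈ t.erase r) : w ∈ Br G t r w :=
  mem_Br.2 ⟨hw, Reach.refl hw⟩

lemma good_Br {t : Finset V} {r w : V} (hw : w ∈ t.erase r) : Good G (Br G t r w) := by
  refine good_of_reach ⟨w, self_mem_Br hw⟩ ?_
  intro x hx y hy
  obtain ⟨hx', hrx⟩ := mem_Br.1 hx
  obtain ⟨hy', hry⟩ := mem_Br.1 hy
  obtain ⟨p, hp⟩ := hrx.symm.trans hry
  refine ⟨p, fun z hz => ?_⟩
  have hz' : Reach G (t.erase r) x z := reach_of_mem_support hp hz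
  exact mem_Br.2 ⟨hz'.mem_right, hrx.trans hz'⟩

lemma Br_disjoint (hG : G.IsTree) {t : Finset V} {r w w' : V}
    (hw : w ∈ Wset G t r) (hw' : w' ∈ Wset G t r) (hne : w ≠ w') {x : V}
    (hx : x ∈ Br G t r w) (hx' : x ∈ Br G t r w') : False := by
  obtain ⟨hw1, hw2⟩ := mem_Wset.1 hw
  obtain ⟨hw1', hw2'⟩ := mem_Wset.1 hw'
  obtain ⟨p, hp⟩ := ((mem_Br.1 hx).2).trans ((mem_Br.1 hx').2).symm
  -- `p : G.Walk w w'` with support in `t.erase r`.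
  set q := p.toPath with hq
  have hqsup : ∀ z ∈ (q : G.Walk w w').support, z ∈ t.erase r :=
    fun z hz => hp z (Walk.support_toPath_subset _ hz)
  have hrq : r ∉ (q : G.Walk w w').support := fun h => (mem_erase.1 (hqsup r h)).1 rfl
  have hP1 : (Walk.cons hw2 (q : G.Walk w w')).IsPath :=
    (Walk.cons_isPath_iff _ _).2 ⟨q.2, hrq⟩
  have := hG.2.path_unique ⟨Walk.cons hw2 (q : G.Walk w w'), hP1⟩ (Path.singleton hw2')
  have hweq : (Walk.cons hw2 (q : G.Walk w w')) = (Path.singleton hw2' : G.Walk r w') :=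
    congrArg Subtype.val this
  have hwmem : w ∈ (Walk.cons hw2 (q : G.Walk w w')).support := by
    simp [Walk.support_cons]
  rw [hweq] at hwmem
  have : w = r ∨ w = w' := by
    simpa [Path.singleton, Walk.support_cons] using hwmem
  rcases this with h | h
  · exact (mem_erase.1 hw1).1 h
  · exact hne h

lemma exists_branch_of_mem (hG : G.IsTree) {t : Finset V} (ht : Good G t) {r : V} (hr : r ∈ t)
    {x : V} (hx : x ∈ t.erase r) : ∃ w ∈ Wset G t r, x ∈ Br G t r w := by
  obtain ⟨hxr, hxt⟩ := mem_erase.1 hx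
  obtain ⟨p, hp, hps⟩ := ht.exists_path hr hxt
  cases p with
  | nil => exact absurd rfl hxr.symm
  | @cons _ b _ hab q =>
    obtain ⟨hqp, hrq⟩ := (Walk.cons_isPath_iff _ _).1 hp
    have hq : ∀ z ∈ q.support, z ∈ t.erase r := by
      intro z hz
      refine mem_erase.2 ⟨fun h => hrq (h ▸ hz), hps z (by simp [Walk.support_cons, hz])⟩
    have hb : b ∈ t.erase r := hq b q.start_mem_support
    refine ⟨b, mem_Wset.2 ⟨hb, hab⟩, mem_Br.2 ⟨mem_erase.2 ⟨hxr, hxt⟩, ⟨q, hq⟩⟩⟩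

/-- A good set avoiding `r` is contained in a single branch. -/
lemma subset_branch (hG : G.IsTree) {t : Finset V} (ht : Good G t) {r : V} (hr : r ∈ t)
    {s : Finset V} (hs : Good G s) (hst : s ⊆ t) (hrs : r ∉ s) :
    ∃ w ∈ Wset G t r, s ⊆ Br G t r w := by
  obtain ⟨x, hx⟩ := hs.1
  have hse : s ⊆ t.erase r := fun y hy =>
    mem_erase.2 ⟨fun h => hrs (h ▸ hy), hst hy⟩
  obtain ⟨w, hw, hxw⟩ := exists_branch_of_mem hG ht hr (hse hx)
  refine ⟨w, hw, fun y hy => ?_⟩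
  have hxy : Reach G (t.erase r) x y := by
    obtain ⟨p, hps⟩ := hs.reach hx hy
    exact ⟨p, fun z hz => hse (hps z hz)⟩
  exact mem_Br.2 ⟨hse hy, ((mem_Br.1 hxw).2).trans hxy⟩

/-- If a good set through `r` meets the branch at `w`, it contains `w`. -/
lemma gate_mem (hG : G.IsTree) {t : Finset V} (ht : Good G t) {r : V} (hr : r ∈ t)
    {s : Finset V} (hs : Good G s) (hrs : r ∈ s) (hst : s ⊆ t)
    {w : V} (hw : w ∈ Wset G t r) {x : V} (hxs : x ∈ s) (hxb : x ∈ Br G t r w) : w ∈ s := by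
  obtain ⟨p, hp, hps⟩ := hs.exists_path hrs hxs
  have hxr : x ≠ r := (mem_erase.1 (Br_subset_erase hxb)).1
  cases p with
  | nil => exact absurd rfl hxr.symm
  | @cons _ b _ hab q =>
    obtain ⟨hqp, hrq⟩ := (Walk.cons_isPath_iff _ _).1 hp
    have hq : ∀ z ∈ q.support, z ∈ t.erase r := by
      intro z hz
      refine mem_erase.2 ⟨fun h => hrq (h ▸ hz), hst (hps z (by simp [Walk.support_cons, hz]))⟩
    have hb : b ∈ t.erase r := hq b q.start_mem_support
    have hbW : b ∈ Wset G t r := mem_Wset.2 ⟨hb, hab⟩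
    have hxBb : x ∈ Br G t r b := mem_Br.2 ⟨Br_subset_erase hxb, ⟨q, hq⟩⟩
    have hbw : b = w := by
      by_contra hne
      exact Br_disjoint hG hbW hw hne hxBb hxb
    have : b ∈ s := hps b (by simp [Walk.support_cons])
    exact hbw ▸ this

end Branch

section Split

lemma inter_Br_good (hG : G.IsTree) {t : Finset V} (ht : Good G t) {r : V} (hr : r ∈ t)
    {s : Finset V} (hs : Good G s) (hrs : r ∈ s) (hst : s ⊆ t)
    {w : V} (hw : w ∈ Wset G t r) (hne : (s ∩ Br G t r w).Nonempty) :
    Good G (s ∩ Br G t r w) ∧ w ∈ s ∩ Br G t r w := by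
  obtain ⟨x, hx⟩ := hne
  have hxs : x ∈ s := (mem_inter.1 hx).1
  have hxb : x ∈ Br G t r w := (mem_inter.1 hx).2
  have hws : w ∈ s := gate_mem hG ht hr hs hrs hst hw hxs hxb
  have hwb : w ∈ Br G t r w := self_mem_Br (mem_Wset.1 hw).1
  have hgood : Good G (s ∩ Br G t r w) := by
    refine good_of_reach ⟨x, hx⟩ ?_
    intro a ha b hb
    obtain ⟨p, hp, hps⟩ := hs.exists_path (mem_inter.1 ha).1 (mem_inter.1 hb).1
    have hbr := path_support_mem hG (good_Br (mem_Wset.1 hw).1)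
      (mem_inter.1 ha).2 (mem_inter.1 hb).2 hp
    exact ⟨p, fun z hz => mem_inter.2 ⟨hps z hz, hbr z hz⟩⟩
  exact ⟨hgood, mem_inter.2 ⟨hws, hwb⟩⟩

lemma diff_Br_good (hG : G.IsTree) {t : Finset V} (ht : Good G t) {r : V} (hr : r ∈ t)
    {s : Finset V} (hs : Good G s) (hrs : r ∈ s) (hst : s ⊆ t)
    {w : V} (hw : w ∈ Wset G t r) : Good G (s \ Br G t r w) := by
  have hrmem : r ∈ s \ Br G t r w :=
    mem_sdiff.2 ⟨hrs, fun h => (mem_erase.1 (Br_subset_erase h)).1 rfl⟩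
  refine good_of_reach ⟨r, hrmem⟩ ?_
  intro a ha b hb
  obtain ⟨has, hab⟩ := mem_sdiff.1 ha
  obtain ⟨hbs, hbb⟩ := mem_sdiff.1 hb
  obtain ⟨p, hp, hps⟩ := hs.exists_path has hbs
  refine ⟨p, fun z hz => mem_sdiff.2 ⟨hps z hz, fun hzb => ?_⟩⟩
  -- z is on the path and in the branch; derive a contradiction
  have hzr : z ≠ r := fun h => (mem_erase.1 (Br_subset_erase hzb)).1 h
  -- r is in the support of the take part
  have htake : r ∈ (p.takeUntil z hz).support := by
    by_contra hrt
    have hsub : ∀ u ∈ (p.takeUntil z hz).support, u ∈ t.erase r := by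
      intro u hu
      refine mem_erase.2 ⟨fun h => hrt (h ▸ hu), hst (hps u (Walk.support_takeUntil_subset _ _ hu))⟩
    have : Reach G (t.erase r) z a :=
      Reach.symm ⟨p.takeUntil z hz, hsub⟩
    have haB : a ∈ Br G t r w :=
      mem_Br.2 ⟨this.mem_right, ((mem_Br.1 hzb).2).trans this⟩
    exact hab haB
  have hdrop : r ∈ (p.dropUntil z hz).support := by
    by_contra hrt
    have hsub : ∀ u ∈ (p.dropUntil z hz).support, u ∈ t.erase r := by
      intro u hu
      refine mem_erase.2 ⟨fun h => hrt (h ▸ hu), hst (hps u (Walk.support_dropUntil_subset _ _ hu))⟩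
    have : Reach G (t.erase r) z b := ⟨p.dropUntil z hz, hsub⟩
    have hbB : b ∈ Br G t r w :=
      mem_Br.2 ⟨this.mem_right, ((mem_Br.1 hzb).2).trans this⟩
    exact hbb hbB
  -- contradiction with nodup
  have hnodup := hp.support_nodup
  rw [← Walk.take_spec p hz, Walk.support_append] at hnodup
  obtain ⟨-, -, hdisj⟩ := List.nodup_append.1 hnodup
  have hdrop' : r ∈ ((p.dropUntil z hz).support).tail := by
    have := Walk.support_eq_cons (p.dropUntil z hz)
    rw [this] at hdrop
    rcases List.mem_cons.1 hdrop with h | h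
    · exact absurd h.symm hzr
    · exact h
  exact hdisj r htake r hdrop' rfl

lemma union_good {d c : Finset V} (hd : Good G d) (hc : Good G c) {r w : V}
    (hrd : r ∈ d) (hwc : w ∈ c) (hadj : G.Adj r w) : Good G (d ∪ c) := by
  have key : ∀ x ∈ d ∪ c, Reach G (d ∪ c) x r := by
    intro x hx
    rcases mem_union.1 hx with h | h
    · exact (hd.reach h hrd).mono subset_union_left
    · refine ((hc.reach h hwc).mono subset_union_right).trans ?_
      refine ⟨Walk.cons hadj.symm Walk.nil, ?_⟩
      intro z hz
      simp only [Walk.support_cons, Walk.support_nil, List.mem_cons, List.mem_singleton] at hz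
      rcases hz with h | h | h
      · exact h ▸ mem_union.2 (Or.inr hwc)
      · exact h ▸ mem_union.2 (Or.inl hrd)
      · simp at h
  refine good_of_reach ⟨r, mem_union.2 (Or.inl hrd)⟩ fun x hx y hy => ?_
  exact (key x hx).trans (key y hy).symm

end Split

section Counting

variable [Fintype V]

variable (G) in
/-- Subtrees contained in `t`. -/
noncomputable def ST (t : Finset V) : Finset (Finset V) :=
  (subtrees G).filter (fun s => s ⊆ t)

variable (G) in
/-- Subtrees contained in `t` and containing `r`. -/
noncomputable def STr (t : Finset V) (r : V) : Finset (Finset V) :=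
  (subtrees G).filter (fun s => r ∈ s ∧ s ⊆ t)

lemma mem_ST {t s : Finset V} : s ∈ ST G t ↔ Good G s ∧ s ⊆ t := by
  simp [ST, subtrees, Good, Finset.mem_filter, and_assoc]

lemma mem_STr {t s : Finset V} {r : V} : s ∈ STr G t r ↔ Good G s ∧ r ∈ s ∧ s ⊆ t := by
  simp only [STr, subtrees, Finset.mem_filter, Finset.mem_univ, true_and, Good, and_assoc]

lemma STr_subset_ST {t : Finset V} {r : V} : STr G t r ⊆ ST G t := by
  intro s hs
  obtain ⟨h1, _, h3⟩ := mem_STr.1 hs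
  exact mem_ST.2 ⟨h1, h3⟩

lemma singleton_mem_STr {t : Finset V} {r : V} (hr : r ∈ t) : {r} ∈ STr G t r :=
  mem_STr.2 ⟨good_singleton r, mem_singleton_self r, singleton_subset_iff.2 hr⟩

/-- Partition of the subtrees of `t` avoiding `r` into branches. -/
lemma A_eq_biUnion (hG : G.IsTree) {t : Finset V} (ht : Good G t) {r : V} (hr : r ∈ t) :
    (ST G t).filter (fun s => r ∉ s)
      = (Wset G t r).biUnion (fun w => ST G (Br G t r w)) := by
  ext s
  constructor
  · intro hs
    obtain ⟨hs1, hs2⟩ := Finset.mem_filter.1 hs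
    obtain ⟨hgood, hsub⟩ := mem_ST.1 hs1
    obtain ⟨w, hw, hsw⟩ := subset_branch hG ht hr hgood hsub hs2
    exact Finset.mem_biUnion.2 ⟨w, hw, mem_ST.2 ⟨hgood, hsw⟩⟩
  · intro hs
    obtain ⟨w, hw, hsw⟩ := Finset.mem_biUnion.1 hs
    obtain ⟨hgood, hsub⟩ := mem_ST.1 hsw
    have hsub' : s ⊆ t.erase r := hsub.trans Br_subset_erase
    refine Finset.mem_filter.2 ⟨mem_ST.2 ⟨hgood, hsub'.trans (erase_subset _ _)⟩, ?_⟩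
    intro hrs
    exact (mem_erase.1 (hsub' hrs)).1 rfl

lemma ST_Br_pairwiseDisjoint (hG : G.IsTree) {t : Finset V} {r : V} :
    (↑(Wset G t r) : Set V).PairwiseDisjoint (fun w => ST G (Br G t r w)) := by
  intro w hw w' hw' hne
  simp only [Function.onFun, Finset.disjoint_left]
  intro s hs hs'
  obtain ⟨hgood, hsub⟩ := mem_ST.1 hs
  obtain ⟨-, hsub'⟩ := mem_ST.1 hs'
  obtain ⟨x, hx⟩ := hgood.1
  exact Br_disjoint hG hw hw' hne (hsub hx) (hsub' hx)

/-- The product structure of subtrees through `r` relative to the branch at `w`. -/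
lemma B_image (hG : G.IsTree) {t : Finset V} (ht : Good G t) {r : V} (hr : r ∈ t)
    {w : V} (hw : w ∈ Wset G t r) :
    ((STr G (t \ Br G t r w) r) ×ˢ (insert ∅ (STr G (Br G t r w) w))).image
        (fun pc => pc.1 ∪ pc.2) = STr G t r := by
  ext s
  simp only [Finset.mem_image, Finset.mem_product, Prod.exists]
  constructor
  · rintro ⟨d, c, ⟨hd, hc⟩, rfl⟩
    obtain ⟨hdg, hdr, hdsub⟩ := mem_STr.1 hd
    rcases Finset.mem_insert.1 hc with rfl | hc
    · rw [Finset.union_empty]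
      exact mem_STr.2 ⟨hdg, hdr, hdsub.trans sdiff_subset⟩
    · obtain ⟨hcg, hcw, hcsub⟩ := mem_STr.1 hc
      refine mem_STr.2 ⟨union_good hdg hcg hdr hcw (mem_Wset.1 hw).2, 
        Finset.mem_union.2 (Or.inl hdr), 
        Finset.union_subset (hdsub.trans sdiff_subset)
          (hcsub.trans (Br_subset_erase.trans (erase_subset _ _)))⟩
  · intro hs
    obtain ⟨hgood, hrs, hsub⟩ := mem_STr.1 hs
    refine ⟨s \ Br G t r w, s ∩ Br G t r w, ⟨?_, ?_⟩, Finset.sdiff_union_inter _ _⟩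
    · exact mem_STr.2 ⟨diff_Br_good hG ht hr hgood hrs hsub hw,
        Finset.mem_sdiff.2 ⟨hrs, fun h => (mem_erase.1 (Br_subset_erase h)).1 rfl⟩,
        Finset.sdiff_subset_sdiff hsub (Finset.Subset.refl _)⟩
    · rcases Finset.eq_empty_or_nonempty (s ∩ Br G t r w) with h | h
      · exact h ▸ Finset.mem_insert_self _ _
      · obtain ⟨hg, hwmem⟩ := inter_Br_good hG ht hr hgood hrs hsub hw h
        exact Finset.mem_insert.2 (Or.inr (mem_STr.2 ⟨hg, hwmem, Finset.inter_subset_right⟩))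

lemma B_injOn {t : Finset V} {r w : V} :
    Set.InjOn (fun pc : Finset V × Finset V => pc.1 ∪ pc.2)
      ↑((STr G (t \ Br G t r w) r) ×ˢ (insert ∅ (STr G (Br G t r w) w))) := by
  have hsubBr : ∀ c ∈ insert ∅ (STr G (Br G t r w) w), c ⊆ Br G t r w := by
    intro c hc
    rcases Finset.mem_insert.1 hc with rfl | hc
    · exact Finset.empty_subset _
    · exact (mem_STr.1 hc).2.2
  have hdisj : ∀ d ∈ STr G (t \ Br G t r w) r, Disjoint d (Br G t r w) := by
    intro d hd
    exact Finset.disjoint_left.2 fun a had hab =>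
      (Finset.mem_sdiff.1 ((mem_STr.1 hd).2.2 had)).2 hab
  rintro ⟨d, c⟩ hdc ⟨d', c'⟩ hdc' heq
  simp only [Finset.mem_coe, Finset.mem_product] at hdc hdc'
  simp only at heq
  have key : ∀ (d c : Finset V), d ∈ STr G (t \ Br G t r w) r →
      c ∈ insert ∅ (STr G (Br G t r w) w) →
      (d ∪ c) \ Br G t r w = d ∧ (d ∪ c) ∩ Br G t r w = c := by
    intro d c hd hc
    constructor
    · rw [Finset.union_sdiff_distrib, Finset.sdiff_eq_empty_iff_subset.2 (hsubBr c hc),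
        Finset.union_empty, (hdisj d hd).sdiff_eq_left]
    · rw [Finset.union_inter_distrib_right, Finset.disjoint_iff_inter_eq_empty.1 (hdisj d hd),
        Finset.empty_union, Finset.inter_eq_left.2 (hsubBr c hc)]
  obtain ⟨h1, h2⟩ := key d c hdc.1 hdc.2
  obtain ⟨h1', h2'⟩ := key d' c' hdc'.1 hdc'.2
  have : d = d' := by rw [← h1, ← h1', heq]
  have : c = c' := by rw [← h2, ← h2', heq]
  simp_all

lemma card_Br_le (hG : G.IsTree) {t : Finset V} {r w : V} (hw : w ∈ t.erase r) :
    (Br G t r w).card ≤ (STr G (Br G t r w) w).card := by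
  classical
  set B := Br G t r w with hB
  have hgood : Good G B := good_Br hw
  have hwB : w ∈ B := self_mem_Br hw
  set f : V → Finset V := fun x =>
    if hx : x ∈ B then ((hgood.exists_path hwB hx).choose.support.toFinset) else ∅ with hf
  have hspec : ∀ x (hx : x ∈ B),
      (hgood.exists_path hwB hx).choose.IsPath ∧
      ∀ z ∈ (hgood.exists_path hwB hx).choose.support, z ∈ B :=
    fun x hx => (hgood.exists_path hwB hx).choose_spec
  apply Finset.card_le_card_of_injOn f
  · intro x (hx : x ∈ B)
    rw [hf]
    simp only [hx, dif_pos]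
    set p := (hgood.exists_path hwB hx).choose
    obtain ⟨hp, hpB⟩ := hspec x hx
    have hmem : ∀ z ∈ p.support, z ∈ p.support.toFinset := fun z hz => List.mem_toFinset.2 hz
    refine mem_STr.2 ⟨?_, List.mem_toFinset.2 p.start_mem_support, ?_⟩
    · refine good_of_reach ⟨w, List.mem_toFinset.2 p.start_mem_support⟩ ?_
      intro a ha b hb
      have hra : Reach G p.support.toFinset w a :=
        reach_of_mem_support hmem (List.mem_toFinset.1 ha)
      have hrb : Reach G p.support.toFinset w b :=
        reach_of_mem_support hmem (List.mem_toFinset.1 hb)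
      exact hra.symm.trans hrb
    · intro z hz
      exact hpB z (List.mem_toFinset.1 hz)
  · intro x hx x' hx' heq
    simp only [Finset.mem_coe] at hx hx'
    rw [hf] at heq
    simp only [hx, hx', dif_pos] at heq
    set p := (hgood.exists_path hwB hx).choose
    set p' := (hgood.exists_path hwB hx').choose
    obtain ⟨hp, hpB⟩ := hspec x hx
    obtain ⟨hp', hpB'⟩ := hspec x' hx'
    have hx'p : x' ∈ p.support := by
      have : x' ∈ p'.support.toFinset := List.mem_toFinset.2 p'.end_mem_support
      rw [← heq] at this
      exact List.mem_toFinset.1 this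
    have hq : (p.takeUntil x' hx'p).IsPath := hp.takeUntil _
    have hqp' : p.takeUntil x' hx'p = p' :=
      congrArg Subtype.val (hG.2.path_unique ⟨p.takeUntil x' hx'p, hq⟩ ⟨p', hp'⟩)
    have hlen : p.support.length = p'.support.length := by
      rw [← List.toFinset_card_of_nodup hp.support_nodup,
        ← List.toFinset_card_of_nodup hp'.support_nodup, heq]
    have hlen' : p.length = p'.length := by
      have h1 := p.length_support
      have h2 := p'.length_support
      omega
    have hdrop : (p.dropUntil x' hx'p).length = 0 := by
      have := congrArg Walk.length (Walk.take_spec p hx'p)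
      rw [Walk.length_append, hqp'] at this
      omega
    exact (Walk.eq_of_length_eq_zero hdrop).symm

end Counting

section Main

variable [Fintype V]

lemma empty_not_mem_STr {t : Finset V} {r : V} : (∅ : Finset V) ∉ STr G t r := by
  intro h
  exact absurd (mem_STr.1 h).2.1 (by simp)

lemma B_card (hG : G.IsTree) {t : Finset V} (ht : Good G t) {r : V} (hr : r ∈ t)
    {w : V} (hw : w ∈ Wset G t r) :
    (STr G t r).card
      = (STr G (t \ Br G t r w) r).card * ((STr G (Br G t r w) w).card + 1) := by
  rw [← B_image hG ht hr hw, Finset.card_image_of_injOn B_injOn, Finset.card_product,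
    Finset.card_insert_of_notMem empty_not_mem_STr]

lemma B_sum (hG : G.IsTree) {t : Finset V} (ht : Good G t) {r : V} (hr : r ∈ t)
    {w : V} (hw : w ∈ Wset G t r) :
    ∑ s ∈ STr G t r, s.card
      = ((STr G (Br G t r w) w).card + 1) * (∑ s ∈ STr G (t \ Br G t r w) r, s.card)
        + (STr G (t \ Br G t r w) r).card * (∑ s ∈ STr G (Br G t r w) w, s.card) := by
  classical
  set D := STr G (t \ Br G t r w) r
  set C := STr G (Br G t r w) w
  have hsum : ∑ s ∈ STr G t r, s.card
      = ∑ pc ∈ D ×ˢ (insert ∅ C), (pc.1 ∪ pc.2).card := by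
    rw [← B_image hG ht hr hw]
    exact Finset.sum_image (fun x hx y hy h => B_injOn (Finset.mem_coe.2 hx) (Finset.mem_coe.2 hy) h)
  have hcardeq : ∀ pc ∈ D ×ˢ (insert ∅ C), (pc.1 ∪ pc.2).card = pc.1.card + pc.2.card := by
    rintro ⟨d, c⟩ hdc
    obtain ⟨hd, hc⟩ := Finset.mem_product.1 hdc
    have hcB : c ⊆ Br G t r w := by
      rcases Finset.mem_insert.1 hc with rfl | hc
      · exact Finset.empty_subset _
      · exact (mem_STr.1 hc).2.2
    have hdisj : Disjoint d c := Finset.disjoint_left.2 fun a had hac =>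
      (Finset.mem_sdiff.1 ((mem_STr.1 hd).2.2 had)).2 (hcB hac)
    exact Finset.card_union_of_disjoint hdisj
  rw [hsum, Finset.sum_congr rfl hcardeq, Finset.sum_product]
  have : ∀ d ∈ D, ∑ c ∈ insert ∅ C, (d.card + c.card)
      = (C.card + 1) * d.card + ∑ c ∈ C, c.card := by
    intro d _
    rw [Finset.sum_add_distrib, Finset.sum_const, Finset.card_insert_of_notMem empty_not_mem_STr,
      Finset.sum_insert empty_not_mem_STr]
    simp only [smul_eq_mul, Finset.card_empty]
    ring
  rw [Finset.sum_congr rfl this, Finset.sum_add_distrib, ← Finset.mul_sum, Finset.sum_const,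
    smul_eq_mul]

lemma A_card (hG : G.IsTree) {t : Finset V} (ht : Good G t) {r : V} (hr : r ∈ t) :
    ((ST G t).filter (fun s => r ∉ s)).card
      = ∑ w ∈ Wset G t r, (ST G (Br G t r w)).card := by
  rw [A_eq_biUnion hG ht hr]
  exact Finset.card_biUnion (fun w hw w' hw' hne => (ST_Br_pairwiseDisjoint hG) hw hw' hne)

lemma A_sum (hG : G.IsTree) {t : Finset V} (ht : Good G t) {r : V} (hr : r ∈ t) :
    ∑ s ∈ (ST G t).filter (fun s => r ∉ s), s.card
      = ∑ w ∈ Wset G t r, ∑ s ∈ ST G (Br G t r w), s.card := by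
  rw [A_eq_biUnion hG ht hr]
  exact Finset.sum_biUnion (ST_Br_pairwiseDisjoint hG)

lemma ST_split {t : Finset V} {r : V} :
    STr G t r = (ST G t).filter (fun s => r ∈ s) := by
  ext s
  simp only [mem_STr, Finset.mem_filter, mem_ST]
  tauto

/-- The key induction: within a good set `t` of a tree, the mean order of subtrees through
`r ∈ t` is at least the mean order of all subtrees (strictly if `t` has ≥ 2 elements),
in cross-multiplied form. -/
lemma key_ind (hG : G.IsTree) :
    ∀ (n : ℕ) (t : Finset V), t.card ≤ n → Good G t → ∀ r ∈ t,
      ((∑ s ∈ ST G t, (s.card : ℝ)) * (STr G t r).card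
         ≤ (∑ s ∈ STr G t r, (s.card : ℝ)) * (ST G t).card)
      ∧ (2 ≤ t.card →
        (∑ s ∈ ST G t, (s.card : ℝ)) * (STr G t r).card
          < (∑ s ∈ STr G t r, (s.card : ℝ)) * (ST G t).card) := by
  intro n
  induction n with
  | zero =>
    intro t htn htg r hr
    exact absurd (Finset.card_pos.2 ⟨r, hr⟩) (by omega)
  | succ n ih =>
    intro t htn htg r hr
    by_cases hcard : 2 ≤ t.card
    · -- main case
      -- notation
      set A := (ST G t).filter (fun s => r ∉ s) with hA
      set B := STr G t r with hB
      -- split of ST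
      have hsplitc : (ST G t).card = B.card + A.card := by
        rw [hB, ST_split, hA]
        exact (Finset.card_filter_add_card_filter_not _).symm
      have hsplits : ∑ s ∈ ST G t, (s.card : ℝ)
          = (∑ s ∈ B, (s.card : ℝ)) + ∑ s ∈ A, (s.card : ℝ) := by
        rw [hB, ST_split, hA]
        exact (Finset.sum_filter_add_sum_filter_not _ _ _).symm
      -- W is nonempty
      obtain ⟨x0, hx0t, hx0r⟩ : ∃ x ∈ t, x ≠ r := by
        obtain ⟨x, hx, hne⟩ := Finset.exists_mem_ne (s := t) (by omega) r
        exact ⟨x, hx, hne⟩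
      obtain ⟨w0, hw0, -⟩ :=
        exists_branch_of_mem hG htg hr (Finset.mem_erase.2 ⟨hx0r, hx0t⟩)
      have hWne : (Wset G t r).Nonempty := ⟨w0, hw0⟩
      -- branch facts
      have hbr_good : ∀ w ∈ Wset G t r, Good G (Br G t r w) :=
        fun w hw => good_Br (mem_Wset.1 hw).1
      have hbr_card : ∀ w ∈ Wset G t r, (Br G t r w).card ≤ n := by
        intro w hw
        have h1 : Br G t r w ⊆ t.erase r := Br_subset_erase
        have h2 := Finset.card_le_card h1
        rw [Finset.card_erase_of_mem hr] at h2
        omega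
      have hCne : ∀ w ∈ Wset G t r, 0 < ((STr G (Br G t r w) w).card : ℝ) := by
        intro w hw
        have : {w} ∈ STr G (Br G t r w) w :=
          singleton_mem_STr (self_mem_Br (mem_Wset.1 hw).1)
        exact_mod_cast Finset.card_pos.2 ⟨{w}, this⟩
      -- the maximum branch ratio
      obtain ⟨wm, hwm, hwmax⟩ := Finset.exists_max_image (Wset G t r)
        (fun w => (∑ s ∈ STr G (Br G t r w) w, (s.card : ℝ)) / (STr G (Br G t r w) w).card)
        hWne
      set M : ℝ :=
        (∑ s ∈ STr G (Br G t r wm) wm, (s.card : ℝ)) / (STr G (Br G t r wm) wm).card with hM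
      -- per-branch bound from the induction hypothesis
      have hbranch : ∀ w ∈ Wset G t r,
          (∑ s ∈ ST G (Br G t r w), (s.card : ℝ))
            ≤ M * (ST G (Br G t r w)).card := by
        intro w hw
        have hih := (ih (Br G t r w) (hbr_card w hw) (hbr_good w hw) w
          (self_mem_Br (mem_Wset.1 hw).1)).1
        have hpos := hCne w hw
        have h1 : (∑ s ∈ ST G (Br G t r w), (s.card : ℝ))
            ≤ ((∑ s ∈ STr G (Br G t r w) w, (s.card : ℝ)) / (STr G (Br G t r w) w).card)
              * (ST G (Br G t r w)).card := by
          rw [div_mul_eq_mul_div, le_div_iff₀ hpos]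
          exact hih
        refine h1.trans ?_
        have := hwmax w hw
        have hSTnn : (0:ℝ) ≤ (ST G (Br G t r w)).card := by positivity
        exact mul_le_mul_of_nonneg_right this hSTnn
      -- A bound
      have hAsum : (∑ s ∈ A, (s.card : ℝ)) ≤ M * A.card := by
        have h1 : (∑ s ∈ A, (s.card : ℝ))
            = ∑ w ∈ Wset G t r, ∑ s ∈ ST G (Br G t r w), (s.card : ℝ) := by
          rw [hA]
          exact_mod_cast congrArg (fun k : ℕ => (k : ℝ)) (A_sum hG htg hr)
        have h2 : ((A.card : ℝ))
            = ∑ w ∈ Wset G t r, ((ST G (Br G t r w)).card : ℝ) := by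
          rw [hA]
          exact_mod_cast congrArg (fun k : ℕ => (k : ℝ)) (A_card hG htg hr)
        rw [h1, h2, Finset.mul_sum]
        exact Finset.sum_le_sum hbranch
      -- B structure at the maximal branch
      set D := STr G (t \ Br G t r wm) r with hD
      set C := STr G (Br G t r wm) wm with hC
      have hBc : ((B.card : ℝ)) = D.card * ((C.card : ℝ) + 1) := by
        exact_mod_cast congrArg (fun k : ℕ => (k : ℝ)) (B_card hG htg hr hwm)
      have hBs : (∑ s ∈ B, (s.card : ℝ))
          = ((C.card : ℝ) + 1) * (∑ s ∈ D, (s.card : ℝ))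
            + (D.card : ℝ) * (∑ s ∈ C, (s.card : ℝ)) := by
        exact_mod_cast congrArg (fun k : ℕ => (k : ℝ)) (B_sum hG htg hr hwm)
      have hrD : r ∈ t \ Br G t r wm :=
        Finset.mem_sdiff.2 ⟨hr, fun h => (Finset.mem_erase.1 (Br_subset_erase h)).1 rfl⟩
      have hnd : (1 : ℝ) ≤ D.card := by
        have : {r} ∈ D := singleton_mem_STr hrD
        exact_mod_cast Finset.card_pos.2 ⟨{r}, this⟩
      have hd_ge : ((D.card : ℝ)) ≤ ∑ s ∈ D, (s.card : ℝ) := by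
        calc ((D.card : ℝ)) = ∑ s ∈ D, (1 : ℝ) := by simp
        _ ≤ ∑ s ∈ D, (s.card : ℝ) := by
          refine Finset.sum_le_sum fun s hs => ?_
          have : s.Nonempty := (mem_STr.1 hs).1.1
          exact_mod_cast Finset.card_pos.2 this
      have hncpos : (0 : ℝ) < C.card := hCne wm hwm
      have hcsq : (∑ s ∈ C, (s.card : ℝ)) ≤ (C.card : ℝ) * C.card := by
        have hBr : ((Br G t r wm).card : ℝ) ≤ C.card := by
          exact_mod_cast card_Br_le hG (mem_Wset.1 hwm).1
        calc (∑ s ∈ C, (s.card : ℝ)) ≤ ∑ s ∈ C, ((Br G t r wm).card : ℝ) := by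
              refine Finset.sum_le_sum fun s hs => ?_
              exact_mod_cast Finset.card_le_card (mem_STr.1 hs).2.2
        _ = (C.card : ℝ) * (Br G t r wm).card := by rw [Finset.sum_const]; ring
        _ ≤ (C.card : ℝ) * C.card := by nlinarith
      have hMn : M * C.card = ∑ s ∈ C, (s.card : ℝ) := by
        rw [hM]
        exact div_mul_cancel₀ _ (ne_of_gt hncpos)
      have hMleN : M ≤ (C.card : ℝ) := by
        refine le_of_mul_le_mul_right ?_ hncpos
        rw [hMn]
        exact hcsq
      have hAna : (1 : ℝ) ≤ A.card := by
        have : {x0} ∈ A := by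
          rw [hA]
          refine Finset.mem_filter.2 ⟨mem_ST.2 ⟨good_singleton x0, Finset.singleton_subset_iff.2 hx0t⟩, ?_⟩
          exact fun h => hx0r (Finset.mem_singleton.1 h).symm
        exact_mod_cast Finset.card_pos.2 ⟨{x0}, this⟩
      -- the decisive comparison
      have hMltB : M * (B.card : ℝ) < ∑ s ∈ B, (s.card : ℝ) := by
        rw [hBc, hBs]
        have e1 : M * ((D.card : ℝ) * ((C.card : ℝ) + 1))
            = (D.card : ℝ) * (∑ s ∈ C, (s.card : ℝ)) + (D.card : ℝ) * M := by
          linear_combination (D.card : ℝ) * hMn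
        have e2 : (D.card : ℝ) * M < (D.card : ℝ) * ((C.card : ℝ) + 1) := by
          refine mul_lt_mul_of_pos_left (lt_of_le_of_lt hMleN (lt_add_one _)) ?_
          linarith
        have e3 : ((C.card : ℝ) + 1) * (D.card : ℝ) ≤ ((C.card : ℝ) + 1) * ∑ s ∈ D, (s.card : ℝ) :=
          mul_le_mul_of_nonneg_left hd_ge (by positivity)
        nlinarith [e1, e2, e3]
      have hkey : (∑ s ∈ A, (s.card : ℝ)) * B.card < (∑ s ∈ B, (s.card : ℝ)) * A.card := by
        have hnbpos : (0 : ℝ) < B.card := by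
          have : {r} ∈ B := by rw [hB]; exact singleton_mem_STr hr
          exact_mod_cast Finset.card_pos.2 ⟨{r}, this⟩
        calc (∑ s ∈ A, (s.card : ℝ)) * B.card ≤ (M * A.card) * B.card :=
              mul_le_mul_of_nonneg_right hAsum (le_of_lt hnbpos)
        _ = (M * B.card) * A.card := by ring
        _ < (∑ s ∈ B, (s.card : ℝ)) * A.card := mul_lt_mul_of_pos_right hMltB (by linarith)
      have hstrict : (∑ s ∈ ST G t, (s.card : ℝ)) * (STr G t r).card
          < (∑ s ∈ STr G t r, (s.card : ℝ)) * (ST G t).card := by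
        rw [hsplits, hsplitc]
        push_cast
        nlinarith [hkey]
      exact ⟨le_of_lt hstrict, fun _ => hstrict⟩
    · -- degenerate case : t = {r}
      have h1 : t = {r} := by
        have : t.card = 1 := by
          have := Finset.card_pos.2 ⟨r, hr⟩
          omega
        obtain ⟨a, ha⟩ := Finset.card_eq_one.1 this
        subst ha
        simpa using (Finset.mem_singleton.1 hr) ▸ rfl
      subst h1
      have hST : ST G {r} = {({r} : Finset V)} := by
        ext s
        simp only [mem_ST, Finset.mem_singleton]
        constructor
        · rintro ⟨⟨hne, -⟩, hsub⟩
          exact Finset.Nonempty.subset_singleton_iff hne |>.1 hsub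
        · rintro rfl
          exact ⟨good_singleton r, Finset.Subset.refl _⟩
      have hSTr : STr G {r} r = {({r} : Finset V)} := by
        ext s
        simp only [mem_STr, Finset.mem_singleton]
        constructor
        · rintro ⟨-, h2, hsub⟩
          exact (Finset.Nonempty.subset_singleton_iff ⟨r, h2⟩).1 hsub
        · rintro rfl
          exact ⟨good_singleton r, Finset.mem_singleton_self r, Finset.Subset.refl _⟩
      refine ⟨?_, fun h2 => absurd h2 (by simp)⟩
      rw [hST, hSTr]

end Main

end Jamison

/-- Every tree `T` on `n ≥ 2` vertices and every vertex `v` satisfy `μ_T(v) > μ_T`. -/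
theorem stmt10 {V : Type*} [Fintype V] (G : SimpleGraph V) (hG : G.IsTree)
    (hn : 2 ≤ Fintype.card V) (v : V) :
    (∑ s ∈ subtrees G, (s.card : ℝ)) / (subtrees G).card <
      (∑ s ∈ subtreesThrough G v, (s.card : ℝ)) / (subtreesThrough G v).card := by
  classical
  haveI : Nonempty V := by
    rw [← Fintype.card_pos_iff]; omega
  have hgoodU : Jamison.Good G Finset.univ := by
    refine ⟨Finset.univ_nonempty, ?_⟩
    rw [Finset.coe_univ]
    exact (SimpleGraph.induceUnivIso G).connected_iff.2 hG.isConnected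
  have hST : subtrees G = Jamison.ST G Finset.univ := by
    ext s
    simp only [subtrees, Jamison.mem_ST, Jamison.Good, Finset.mem_filter, Finset.mem_univ,
      true_and, Finset.subset_univ, and_true]
  have hSTr : subtreesThrough G v = Jamison.STr G Finset.univ v := by
    ext s
    simp only [subtreesThrough, Jamison.mem_STr, Jamison.Good, Finset.mem_filter, Finset.mem_univ,
      true_and, Finset.subset_univ, and_true]
    constructor
    · rintro ⟨h1, h2⟩
      exact ⟨⟨⟨v, h1⟩, h2⟩, h1⟩
    · rintro ⟨⟨-, h2⟩, h1⟩
      exact ⟨h1, h2⟩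
  have hkey := (Jamison.key_ind hG (Fintype.card V) Finset.univ (by simp) hgoodU v
    (Finset.mem_univ v)).2 (by simpa using hn)
  have hpos1 : (0 : ℝ) < (Jamison.ST G Finset.univ).card := by
    have : (Finset.univ : Finset V) ∈ Jamison.ST G Finset.univ :=
      Jamison.mem_ST.2 ⟨hgoodU, Finset.Subset.refl _⟩
    exact_mod_cast Finset.card_pos.2 ⟨_, this⟩
  have hpos2 : (0 : ℝ) < (Jamison.STr G Finset.univ v).card := by
    have : ({v} : Finset V) ∈ Jamison.STr G Finset.univ v :=
      Jamison.singleton_mem_STr (Finset.mem_univ v)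
    exact_mod_cast Finset.card_pos.2 ⟨_, this⟩
  rw [hST, hSTr, div_lt_div_iff₀ hpos1 hpos2]
  exact hkey
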